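/- Let γ : ℂ, k₁ k₂ : ℕ, and p q : ℝ. Define the generalized monomial M : ℂ → ℂ for ξ ≠ 0 by M ξ = ξ ^ k₁ * (starRingEnd ℂ ξ) ^ k₂ * (‖ξ‖ ^ p : ℝ) * Complex.exp (Complex.I * q * Real.log ‖ξ‖). Then for every t : ℝ and every ξ : ℂ with ξ ≠ 0, M (Complex.exp (γ * t) * ξ) = Complex.exp ((k₁ * γ + k₂ * (starRingEnd ℂ γ) + (p + q * Complex.I) * γ.re) * t) * M ξ. In particular, every generalized monomial ξ^{k₁} ξ̄^{k₂} |ξ|^{p} e^{i q log|ξ|} is an eigenfunction of the linear flow ξ ↦ e^{γ t} ξ with eigenvalue k₁γ + k₂γ̄ + (p + iq) Re γ. -/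

import Mathlib

/-- Every generalized monomial `ξ^{k₁} ξ̄^{k₂} |ξ|^{p} e^{i q log|ξ|}` is an
eigenfunction of the linear flow `ξ ↦ e^{γt} ξ` with eigenvalue
`k₁γ + k₂γ̄ + (p + iq) Re γ`. -/
theorem stmt_3 (γ : ℂ) (k₁ k₂ : ℕ) (p q : ℝ) (M : ℂ → ℂ)
    (hM : ∀ ξ : ℂ, ξ ≠ 0 →
      M ξ = ξ ^ k₁ * (starRingEnd ℂ ξ) ^ k₂ * ((‖ξ‖ ^ p : ℝ) : ℂ)
        * Complex.exp (Complex.I * (q : ℂ) * ((Real.log ‖ξ‖ : ℝ) : ℂ))) :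
    ∀ (t : ℝ) (ξ : ℂ), ξ ≠ 0 →
      M (Complex.exp (γ * (t : ℂ)) * ξ)
        = Complex.exp (((k₁ : ℂ) * γ + (k₂ : ℂ) * (starRingEnd ℂ γ)
            + ((p : ℂ) + (q : ℂ) * Complex.I) * (γ.re : ℂ)) * (t : ℂ)) * M ξ := by
  intro t ξ hξ
  have he : Complex.exp (γ * (t : ℂ)) ≠ 0 := Complex.exp_ne_zero _
  rw [hM _ (mul_ne_zero he hξ), hM ξ hξ]
  have hnorm : ‖Complex.exp (γ * (t : ℂ)) * ξ‖ = Real.exp (γ.re * t) * ‖ξ‖ := by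
    rw [norm_mul, Complex.norm_exp]
    simp [Complex.mul_re]
  have hnξ : ‖ξ‖ ≠ 0 := norm_ne_zero_iff.mpr hξ
  have hlog : Real.log ‖Complex.exp (γ * (t : ℂ)) * ξ‖ = γ.re * t + Real.log ‖ξ‖ := by
    rw [hnorm, Real.log_mul (Real.exp_ne_zero _) hnξ, Real.log_exp]
  have hrpow : ‖Complex.exp (γ * (t : ℂ)) * ξ‖ ^ p
      = Real.exp (γ.re * t * p) * ‖ξ‖ ^ p := by
    rw [hnorm, Real.mul_rpow (Real.exp_pos _).le (norm_nonneg _), ← Real.exp_mul]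
  have hconj : (starRingEnd ℂ) (Complex.exp (γ * (t : ℂ)))
      = Complex.exp ((starRingEnd ℂ) γ * (t : ℂ)) := by
    rw [← Complex.exp_conj, map_mul, Complex.conj_ofReal]
  rw [hrpow, hlog, mul_pow, map_mul, mul_pow, hconj, ← Complex.exp_nat_mul,
    ← Complex.exp_nat_mul]
  push_cast
  have key : (k₁:ℂ) * (γ * t) + (k₂:ℂ) * ((starRingEnd ℂ) γ * t)
      + (γ.re : ℂ) * t * p + Complex.I * q * ((γ.re:ℂ) * t)
      = ((k₁:ℂ) * γ + (k₂:ℂ) * (starRingEnd ℂ) γ + ((p:ℂ) + (q:ℂ) * Complex.I) * (γ.re:ℂ)) * t := by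
    ring
  calc Complex.exp ((k₁:ℂ) * (γ * t)) * ξ ^ k₁
        * (Complex.exp ((k₂:ℂ) * ((starRingEnd ℂ) γ * t)) * (starRingEnd ℂ) ξ ^ k₂)
        * (Complex.exp ((γ.re:ℂ) * t * p) * ((‖ξ‖ ^ p : ℝ) : ℂ))
        * Complex.exp (Complex.I * q * ((γ.re:ℂ) * t + (Real.log ‖ξ‖ : ℂ)))
      = Complex.exp ((k₁:ℂ) * (γ * t) + (k₂:ℂ) * ((starRingEnd ℂ) γ * t)
          + (γ.re : ℂ) * t * p + Complex.I * q * ((γ.re:ℂ) * t))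
        * (ξ ^ k₁ * (starRingEnd ℂ) ξ ^ k₂ * ((‖ξ‖ ^ p : ℝ) : ℂ)
          * Complex.exp (Complex.I * q * (Real.log ‖ξ‖ : ℂ))) := by
        rw [show Complex.I * (q:ℂ) * ((γ.re:ℂ) * t + (Real.log ‖ξ‖ : ℂ))
            = Complex.I * q * ((γ.re:ℂ) * t) + Complex.I * q * (Real.log ‖ξ‖ : ℂ) by ring,
          Complex.exp_add, Complex.exp_add, Complex.exp_add, Complex.exp_add]
        ring
    _ = _ := by rw [key]
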